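/- For any a, b, c, d, e, f ∈ ℂ and p, q ∈ ℂ with f ≠ -1, the intersection multiplicity at the origin of the affine curves X^2 - Y = 0 and X^2 + b*Y^2 + d*X*Y + f*Y = 0 equals 2. -/

import Mathlib

open MvPowerSeries

/-- The local intersection multiplicity at the origin of two plane curve germs,
defined as the ℂ-dimension of the quotient of the ring of formal power series
ℂ⟦X,Y⟧ by the ideal generated by the two defining equations. -/
noncomputable def interMultOrigin (f g : MvPowerSeries (Fin 2) ℂ) : ℕ :=
  Module.finrank ℂ (MvPowerSeries (Fin 2) ℂ ⧸ Ideal.span {f, g})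

open TrivSqZeroExt

noncomputable def phi : MvPowerSeries (Fin 2) ℂ →ₐ[ℂ] DualNumber ℂ where
  toFun f := (constantCoeff (σ := Fin 2) (R := ℂ) f, coeff (σ := Fin 2) (R := ℂ) (Finsupp.single 0 1) f)
  map_one' := by
    refine TrivSqZeroExt.ext ?_ ?_ <;>
      simp [fst_mk, snd_mk, fst_one, snd_one, MvPowerSeries.coeff_one, Finsupp.single_eq_zero]
  map_mul' f g := by
    refine TrivSqZeroExt.ext ?_ ?_
    · exact map_mul _ f g
    · simp only [snd_mk, snd_mul, fst_mk]
      rw [MvPowerSeries.coeff_mul, Finsupp.antidiagonal_single, Finset.sum_map]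
      rw [show (Finset.HasAntidiagonal.antidiagonal (1:ℕ)) = {(0,1),(1,0)} from rfl]
      simp [smul_eq_mul, mul_comm]
      erw [snd_mul]; simp [mul_comm]
  map_zero' := by
    refine TrivSqZeroExt.ext ?_ ?_ <;> simp [fst_mk, snd_mk]
  map_add' f g := by
    refine TrivSqZeroExt.ext ?_ ?_ <;> exact map_add _ f g
  commutes' r := by
    refine TrivSqZeroExt.ext ?_ ?_ <;>
      simp [fst_mk, snd_mk, algebraMap_eq_inl, MvPowerSeries.algebraMap_apply,
        MvPowerSeries.coeff_C, Finsupp.single_eq_zero]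

theorem phi_surj : Function.Surjective phi := by
  intro x
  refine ⟨MvPowerSeries.C (σ := Fin 2) (R := ℂ) x.fst + MvPowerSeries.C (σ := Fin 2) (R := ℂ) x.snd * X 0, ?_⟩
  refine TrivSqZeroExt.ext ?_ ?_
  · show constantCoeff (σ := Fin 2) (R := ℂ) _ = _
    simp
  · show coeff (σ := Fin 2) (R := ℂ) (Finsupp.single 0 1) _ = _
    simp [MvPowerSeries.coeff_C, Finsupp.single_eq_zero, MvPowerSeries.coeff_C_mul,
      MvPowerSeries.coeff_X]

theorem ker_phi : RingHom.ker phi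
    = Ideal.span {X 1, (X 0)^2} := by
  apply le_antisymm
  · intro f hf
    rw [RingHom.mem_ker] at hf
    have h0 : constantCoeff (σ := Fin 2) (R := ℂ) f = 0 := congrArg TrivSqZeroExt.fst hf
    have h1 : coeff (σ := Fin 2) (R := ℂ) (Finsupp.single 0 1) f = 0 := congrArg TrivSqZeroExt.snd hf
    set g : MvPowerSeries (Fin 2) ℂ := fun n => if n 1 = 0 then coeff (R := ℂ) n f else 0 with hg
    have hcg : ∀ n, coeff (R := ℂ) n g = if n 1 = 0 then coeff (R := ℂ) n f else 0 := fun n => rfl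
    have hd1 : (X 1 : MvPowerSeries (Fin 2) ℂ) ∣ f - g := by
      rw [MvPowerSeries.X_dvd_iff]
      intro m hm
      rw [map_sub, hcg, if_pos hm, sub_self]
    have hd2 : (X 0 : MvPowerSeries (Fin 2) ℂ)^2 ∣ g := by
      rw [MvPowerSeries.X_pow_dvd_iff]
      intro m hm
      rw [hcg]
      split_ifs with hm1
      · -- m 0 < 2, m 1 = 0
        have : m = 0 ∨ m = Finsupp.single 0 1 := by
          interval_cases h : m 0
          · left; ext i; fin_cases i <;> simp_all
          · right; ext i; fin_cases i <;> simp_all [Finsupp.single_apply]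
        rcases this with rfl | rfl
        · exact h0
        · exact h1
      · rfl
    obtain ⟨A, hA⟩ := hd1
    obtain ⟨B, hB⟩ := hd2
    rw [Ideal.mem_span_pair]
    exact ⟨A, B, by rw [mul_comm A, mul_comm B, ← hA, ← hB]; ring⟩
  · rw [Ideal.span_le]
    rintro x hx
    simp only [Set.mem_insert_iff, Set.mem_singleton_iff] at hx
    rcases hx with rfl | rfl
    · rw [SetLike.mem_coe, RingHom.mem_ker]
      refine TrivSqZeroExt.ext ?_ ?_
      · show constantCoeff (σ := Fin 2) (R := ℂ) _ = _; simp
      · show coeff (σ := Fin 2) (R := ℂ) (Finsupp.single 0 1) (X 1) = _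
        simp [MvPowerSeries.coeff_X, Finsupp.single_left_inj]
    · rw [SetLike.mem_coe, RingHom.mem_ker, map_pow]
      refine TrivSqZeroExt.ext ?_ ?_
      · show (_ : DualNumber ℂ).fst = _
        rw [fst_pow]
        show (constantCoeff (σ := Fin 2) (R := ℂ) (X 0))^2 = _
        simp
      · show (_ : DualNumber ℂ).snd = _
        rw [sq, snd_mul]
        show constantCoeff (σ := Fin 2) (R := ℂ) (X 0) • coeff (σ := Fin 2) (R := ℂ) (Finsupp.single 0 1) (X 0)
          + (MulOpposite.op (constantCoeff (σ := Fin 2) (R := ℂ) (X 0))) • coeff (σ := Fin 2) (R := ℂ) (Finsupp.single 0 1) (X 0) = _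
        simp

theorem span_eq (b d f : ℂ) (hf : f ≠ -1) :
    Ideal.span ({(X 0) ^ 2 - X 1,
      (X 0) ^ 2 + C (σ := Fin 2) (R := ℂ) b * (X 1) ^ 2 + C (σ := Fin 2) (R := ℂ) d * X 0 * X 1
        + C (σ := Fin 2) (R := ℂ) f * X 1} : Set (MvPowerSeries (Fin 2) ℂ))
    = Ideal.span {X 1, (X 0)^2} := by
  set p1 : MvPowerSeries (Fin 2) ℂ := (X 0) ^ 2 - X 1 with hp1
  set p2 : MvPowerSeries (Fin 2) ℂ := (X 0) ^ 2 + C (σ := Fin 2) (R := ℂ) b * (X 1) ^ 2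
    + C (σ := Fin 2) (R := ℂ) d * X 0 * X 1 + C (σ := Fin 2) (R := ℂ) f * X 1 with hp2
  set u : MvPowerSeries (Fin 2) ℂ := 1 + C (σ := Fin 2) (R := ℂ) f + C (σ := Fin 2) (R := ℂ) b * X 1
    + C (σ := Fin 2) (R := ℂ) d * X 0 with hu
  have hdiff : p2 - p1 = X 1 * u := by rw [hp1, hp2, hu]; ring
  have hunit : IsUnit u := by
    rw [MvPowerSeries.isUnit_iff_constantCoeff]
    have : constantCoeff (σ := Fin 2) (R := ℂ) u = 1 + f := by simp [hu]
    rw [this]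
    apply isUnit_iff_ne_zero.mpr
    intro h
    apply hf
    linear_combination h - 1
  obtain ⟨v, hv⟩ := hunit
  have huv : u * ↑v⁻¹ = 1 := by rw [← hv]; exact v.mul_inv
  apply le_antisymm <;> rw [Ideal.span_le] <;> rintro x hx <;>
    simp only [Set.mem_insert_iff, Set.mem_singleton_iff] at hx <;>
    rw [SetLike.mem_coe, Ideal.mem_span_pair]
  · rcases hx with rfl | rfl
    · exact ⟨-1, 1, by ring⟩
    · exact ⟨C (σ := Fin 2) (R := ℂ) b * X 1 + C (σ := Fin 2) (R := ℂ) d * X 0 + C (σ := Fin 2) (R := ℂ) f, 1, by ring⟩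
  · rcases hx with rfl | rfl
    · refine ⟨-↑v⁻¹, ↑v⁻¹, ?_⟩
      have : (↑v⁻¹ : MvPowerSeries (Fin 2) ℂ) * (p2 - p1) = X 1 := by
        rw [hdiff]
        calc ↑v⁻¹ * (X 1 * u) = X 1 * (u * ↑v⁻¹) := by ring
        _ = X 1 := by rw [huv, mul_one]
      linear_combination this
    · exact ⟨1 - ↑v⁻¹, ↑v⁻¹, by linear_combination (↑v⁻¹ : MvPowerSeries (Fin 2) ℂ) * hdiff + X 1 * huv⟩

theorem finrank_dual : Module.finrank ℂ (DualNumber ℂ) = 2 := by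
  have : Module.finrank ℂ (DualNumber ℂ) = Module.finrank ℂ (ℂ × ℂ) := rfl
  rw [this, Module.finrank_prod, Module.finrank_self]

set_option linter.unusedVariables false in
/-- The intersection multiplicity at the origin of the affine curves X² - Y = 0 and
X² + bY² + dXY + fY = 0 (dehomogenizations at [0:0:1] of the conics X² - YZ and
X² + bY² + dXY + fYZ) equals 2 whenever f ≠ -1. -/
theorem stmt_9 (a b c d e f p q : ℂ) (hf : f ≠ -1) :
    interMultOrigin
      ((X 0) ^ 2 - X 1)
      ((X 0) ^ 2 + C (σ := Fin 2) (R := ℂ) b * (X 1) ^ 2 + C (σ := Fin 2) (R := ℂ) d * X 0 * X 1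
        + C (σ := Fin 2) (R := ℂ) f * X 1) = 2 := by
  unfold interMultOrigin
  rw [span_eq b d f hf, ← ker_phi]
  have e := Ideal.quotientKerAlgEquivOfSurjective phi_surj
  rw [e.toLinearEquiv.finrank_eq, finrank_dual]
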